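/- The measures g3 and g5 are independent of each other for strongly possible cross joins: there exist an incomplete table T1 with attribute sets X1, Y1 such that g3(X1 ×_sp Y1) > g5(X1 ×_sp Y1), and an incomplete table T2 with attribute sets X2, Y2 such that g3(X2 ×_sp Y2) < g5(X2 ×_sp Y2). -/

import Mathlib

/- Common framework: incomplete tables, strongly possible worlds and constraints.
   A tuple assigns each attribute a value in `Option V`, with `none` encoding the
   null marker ⊥.  In the degenerate case of an attribute whose active domain is
   empty, the fresh symbol `s` (outside all domains) is encoded by `none` in the
   strongly possible world: it is a single fixed symbol, equal only to itself and
   different from every domain value, exactly as `none` behaves. -/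

namespace SPDB

variable {α V : Type} [DecidableEq α] [DecidableEq V]

/-- A tuple over attribute type `α` with values in `V`; `none` is the null ⊥. -/
abbrev Tuple (α V : Type) := α → Option V

/-- An incomplete table: a finite multiset of tuples. -/
abbrev Table (α V : Type) := Multiset (Tuple α V)

/-- The active domain of attribute `A` in table `T`: the non-null values in column `A`. -/
def VD (T : Table α V) (A : α) : Finset V :=
  (T.filterMap fun t => t A).toFinset

/-- `t'` is a strongly possible extension of `t` w.r.t. the active domains of `T`:
non-null entries are kept, each null is replaced by an active domain value
(by the fresh symbol, encoded `none`, if the active domain is empty). -/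
def spExt (T : Table α V) (t t' : Tuple α V) : Prop :=
  ∀ A, (t A ≠ none → t' A = t A) ∧
       (t A = none → if (VD T A).Nonempty then ∃ v ∈ VD T A, t' A = some v
                     else t' A = none)

/-- `T'` is a strongly possible world of `T`. -/
def spWorld (T T' : Table α V) : Prop := Multiset.Rel (spExt T) T T'

/-- Two tuples agree on the attribute set `X`. -/
def agrees (X : Finset α) (t1 t2 : Tuple α V) : Prop := ∀ A ∈ X, t1 A = t2 A

/-- Weak similarity on the attribute set `X`. -/
def weakSim (X : Finset α) (t1 t2 : Tuple α V) : Prop :=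
  ∀ A ∈ X, t1 A = t2 A ∨ t1 A = none ∨ t2 A = none

/-- `t` is `X`-total: no nulls among the attributes of `X`. -/
def isTotal (X : Finset α) (t : Tuple α V) : Prop := ∀ A ∈ X, t A ≠ none

instance (X : Finset α) : DecidablePred (isTotal (V := V) X) := fun t =>
  decidable_of_iff (∀ A ∈ X, t A ≠ none) Iff.rfl

/-- Projection of a tuple to the attribute set `X` (nulls outside `X`). -/
def proj (X : Finset α) (t : Tuple α V) : Tuple α V :=
  fun A => if A ∈ X then t A else none

/-- A (complete) table satisfies the key `K`: tuple occurrences are pairwise distinct on `K`. -/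
def keyOn (K : Finset α) (T' : Table α V) : Prop := (T'.map (proj K)).Nodup

/-- A (complete) table satisfies the functional dependency `X → Y`. -/
def FD (X Y : Finset α) (T' : Table α V) : Prop :=
  ∀ t1 ∈ T', ∀ t2 ∈ T', agrees X t1 t2 → agrees Y t1 t2

/-- A (complete) table over schema `R` satisfies the multivalued dependency `X ↠ Y`. -/
def MVD (R X Y : Finset α) (T' : Table α V) : Prop :=
  ∀ t1 ∈ T', ∀ t2 ∈ T', agrees X t1 t2 →
    ∃ t ∈ T', agrees (X ∪ Y) t t1 ∧ agrees (X ∪ (R \ Y)) t t2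

/-- A (complete) table satisfies the cross join `X × Y`. -/
def CJ (X Y : Finset α) (T' : Table α V) : Prop :=
  ∀ t1 ∈ T', ∀ t2 ∈ T', ∃ t ∈ T', agrees X t t1 ∧ agrees Y t t2

/-- `K` is a strongly possible key of `T`: `sp⟨K⟩`. -/
def spKey (T : Table α V) (K : Finset α) : Prop :=
  ∃ T', spWorld T T' ∧ keyOn K T'

/-- The strongly possible functional dependency `X →_sp Y` holds in `T`. -/
def spFD (T : Table α V) (X Y : Finset α) : Prop :=
  ∃ T', spWorld T T' ∧ FD X Y T'

/-- The strongly possible multivalued dependency `X ↠_sp Y` holds in `T` over schema `R`. -/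
def spMVD (R : Finset α) (T : Table α V) (X Y : Finset α) : Prop :=
  ∃ T', spWorld T T' ∧ MVD R X Y T'

/-- The strongly possible cross join `X ×_sp Y` holds in `T`. -/
def spCJ (T : Table α V) (X Y : Finset α) : Prop :=
  ∃ T', spWorld T T' ∧ CJ X Y T'

/-- Lien's null multivalued dependency `X ↠ Y` over schema `R`. -/
def NMVD (R : Finset α) (T : Table α V) (X Y : Finset α) : Prop :=
  ∀ t1 ∈ T, ∀ t2 ∈ T, isTotal X t1 → isTotal X t2 → agrees X t1 t2 →
    ∃ t ∈ T, agrees (X ∪ Y) t t1 ∧ agrees (X ∪ (R \ Y)) t t2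

/-- The minimum number of tuples whose removal from `T` makes `P` hold
(`T = T₀ + S` means that `S` is a submultiset of `T` and `T₀ = T ∖ S`). -/
noncomputable def g3Card (T : Table α V) (P : Table α V → Prop) : ℕ :=
  sInf {n : ℕ | ∃ T₀ S : Table α V, T = T₀ + S ∧ P T₀ ∧ Multiset.card S = n}

/-- `g3`: the minimum, over submultisets `S` of `T` whose removal makes the
constraint `P` hold, of `|S|/|T|`. -/
noncomputable def g3 (T : Table α V) (P : Table α V → Prop) : ℚ :=
  (g3Card T P : ℚ) / (Multiset.card T : ℚ)

/-- The minimum number of tuples whose addition to `T` makes `P` hold. -/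
noncomputable def g5Card (T : Table α V) (P : Table α V → Prop) : ℕ :=
  sInf {n : ℕ | ∃ S : Table α V, P (T + S) ∧ Multiset.card S = n}

/-- `g5`: the minimum, over finite multisets `S` of tuples whose addition makes
the constraint `P` hold, of `|S|/|T|`. -/
noncomputable def g5 (T : Table α V) (P : Table α V → Prop) : ℚ :=
  (g5Card T P : ℚ) / (Multiset.card T : ℚ)

end SPDB


namespace Stmt16

open SPDB

/-- tuple with value 1 everywhere -/
def t1 : Tuple ℕ ℕ := fun _ => some 1
/-- tuple with value 2 everywhere -/
def t2 : Tuple ℕ ℕ := fun _ => some 2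
/-- fully null tuple -/
def tn : Tuple ℕ ℕ := fun _ => none
/-- tuple (1,2,...): 1 at attribute 0, 2 elsewhere -/
def s12 : Tuple ℕ ℕ := fun A => if A = 0 then some 1 else some 2
/-- tuple (2,1,...) -/
def s21 : Tuple ℕ ℕ := fun A => if A = 0 then some 2 else some 1

lemma rel_mem {r : Tuple ℕ ℕ → Tuple ℕ ℕ → Prop} {s t : Table ℕ ℕ}
    (h : Multiset.Rel r s t) {a : Tuple ℕ ℕ} (ha : a ∈ s) : ∃ b ∈ t, r a b := by
  induction h with
  | zero => simp at ha
  | cons hr hrel ih =>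
    rcases Multiset.mem_cons.1 ha with h | h
    · exact ⟨_, Multiset.mem_cons_self _ _, h ▸ hr⟩
    · obtain ⟨b, hb, hrb⟩ := ih h
      exact ⟨b, Multiset.mem_cons_of_mem hb, hrb⟩

lemma rel_countP {r : Tuple ℕ ℕ → Tuple ℕ ℕ → Prop} {p q : Tuple ℕ ℕ → Prop}
    [DecidablePred p] [DecidablePred q]
    (hpq : ∀ a b, r a b → p b → q a) {s t : Table ℕ ℕ} (h : Multiset.Rel r s t) :
    Multiset.countP p t ≤ Multiset.countP q s := by
  induction h with
  | zero => simp
  | @cons a b as bs hr hrel ih =>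
    rw [Multiset.countP_cons, Multiset.countP_cons]
    by_cases hb : p b
    · have : q a := hpq a b hr hb
      simp only [if_pos hb, if_pos this]
      omega
    · simp only [if_neg hb]
      split <;> omega

lemma two_le_countP {p : Tuple ℕ ℕ → Prop} [DecidablePred p] {s : Table ℕ ℕ}
    {u v : Tuple ℕ ℕ} (hu : u ∈ s) (hv : v ∈ s) (huv : u ≠ v) (hpu : p u) (hpv : p v) :
    2 ≤ Multiset.countP p s := by
  rw [Multiset.countP_eq_card_filter]
  have hu' : u ∈ s.filter p := Multiset.mem_filter.2 ⟨hu, hpu⟩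
  have hv' : v ∈ s.filter p := Multiset.mem_filter.2 ⟨hv, hpv⟩
  obtain ⟨f, hf⟩ := Multiset.exists_cons_of_mem hu'
  rw [hf] at hv' ⊢
  have hvf : v ∈ f := by
    rcases Multiset.mem_cons.1 hv' with h | h
    · exact absurd h.symm huv
    · exact h
  have : 0 < Multiset.card f := Multiset.card_pos_iff_exists_mem.2 ⟨v, hvf⟩
  simp only [Multiset.card_cons]
  omega

/-- the "bad" predicate on completed tuples -/
abbrev pbad : Tuple ℕ ℕ → Prop := fun t => ¬ (t 0 = t 1)
/-- the "potentially bad" predicate on incomplete tuples -/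
abbrev qbad : Tuple ℕ ℕ → Prop := fun t => ¬ (t 0 = t 1) ∨ t 0 = none

lemma spExt_bad {T : Table ℕ ℕ} {a b : Tuple ℕ ℕ} (h : spExt T a b) (hp : pbad b) :
    qbad a := by
  by_cases h0 : a 0 = none
  · exact Or.inr h0
  · by_cases h1 : a 1 = none
    · refine Or.inl fun he => h0 ?_
      rw [he]; exact h1
    · refine Or.inl fun he => hp ?_
      rw [(h 0).1 h0, (h 1).1 h1, he]

/-- key counting lemma: a table that contains an all-1 tuple and an all-2 tuple
(on attributes 0,1) but at most one "potentially bad" tuple cannot satisfy the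
strongly possible cross join {0} ×_sp {1}. -/
lemma not_spCJ {T₀ : Table ℕ ℕ}
    (h1 : ∃ a ∈ T₀, a 0 = some 1 ∧ a 1 = some 1)
    (h2 : ∃ b ∈ T₀, b 0 = some 2 ∧ b 1 = some 2)
    (hq : Multiset.countP qbad T₀ ≤ 1) :
    ¬ spCJ T₀ {0} {1} := by
  rintro ⟨T', hrel, hcj⟩
  obtain ⟨a, ha, ha0, ha1⟩ := h1
  obtain ⟨b, hb, hb0, hb1⟩ := h2
  obtain ⟨a', ha', hexta⟩ := rel_mem hrel ha
  obtain ⟨b', hb', hextb⟩ := rel_mem hrel hb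
  have ha'0 : a' 0 = some 1 := by rw [(hexta 0).1 (by rw [ha0]; simp)]; exact ha0
  have ha'1 : a' 1 = some 1 := by rw [(hexta 1).1 (by rw [ha1]; simp)]; exact ha1
  have hb'0 : b' 0 = some 2 := by rw [(hextb 0).1 (by rw [hb0]; simp)]; exact hb0
  have hb'1 : b' 1 = some 2 := by rw [(hextb 1).1 (by rw [hb1]; simp)]; exact hb1
  obtain ⟨u, hu, hux, huy⟩ := hcj a' ha' b' hb'
  obtain ⟨v, hv, hvx, hvy⟩ := hcj b' hb' a' ha'
  have hu0 : u 0 = some 1 := (hux 0 (by simp)).trans ha'0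
  have hu1 : u 1 = some 2 := (huy 1 (by simp)).trans hb'1
  have hv0 : v 0 = some 2 := (hvx 0 (by simp)).trans hb'0
  have hv1 : v 1 = some 1 := (hvy 1 (by simp)).trans ha'1
  have hne : u ≠ v := by
    intro h; rw [h, hv0] at hu0; simp at hu0
  have hpu : pbad u := by simp [pbad, hu0, hu1]
  have hpv : pbad v := by simp [pbad, hv0, hv1]
  have h2le : 2 ≤ Multiset.countP pbad T' := two_le_countP hu hv hne hpu hpv
  have hle : Multiset.countP pbad T' ≤ Multiset.countP qbad T₀ :=
    rel_countP (r := spExt T₀) (fun a b hab hp => spExt_bad hab hp) hrel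
  omega

lemma spExt_total {T : Table ℕ ℕ} {t : Tuple ℕ ℕ} (h : ∀ A, t A ≠ none) :
    spExt T t t :=
  fun A => ⟨fun _ => rfl, fun hA => absurd hA (h A)⟩

lemma mem_VD {T : Table ℕ ℕ} {t : Tuple ℕ ℕ} {A : ℕ} {v : ℕ}
    (ht : t ∈ T) (hv : t A = some v) : v ∈ VD T A := by
  rw [VD, Multiset.mem_toFinset, Multiset.mem_filterMap]
  exact ⟨t, ht, hv⟩

lemma agrees_single {k : ℕ} {w u : Tuple ℕ ℕ} (h : w k = u k) :
    agrees ({k} : Finset ℕ) w u := by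
  intro A hA
  rw [Finset.mem_singleton.1 hA]
  exact h

/-- a complete table containing all four 0-1 combinations, and nothing else,
satisfies the cross join {0} × {1}. -/
lemma cj_of {T' : Table ℕ ℕ}
    (h11 : ∃ w ∈ T', w 0 = some 1 ∧ w 1 = some 1)
    (h12 : ∃ w ∈ T', w 0 = some 1 ∧ w 1 = some 2)
    (h21 : ∃ w ∈ T', w 0 = some 2 ∧ w 1 = some 1)
    (h22 : ∃ w ∈ T', w 0 = some 2 ∧ w 1 = some 2)
    (hall : ∀ u ∈ T', (u 0 = some 1 ∨ u 0 = some 2) ∧ (u 1 = some 1 ∨ u 1 = some 2)) :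
    CJ ({0} : Finset ℕ) ({1} : Finset ℕ) T' := by
  intro u1 hu1 u2 hu2
  obtain ⟨hx, -⟩ := hall u1 hu1
  obtain ⟨-, hy⟩ := hall u2 hu2
  rcases hx with hx | hx <;> rcases hy with hy | hy
  · obtain ⟨w, hw, h0, h1⟩ := h11
    exact ⟨w, hw, agrees_single (by rw [h0, hx]), agrees_single (by rw [h1, hy])⟩
  · obtain ⟨w, hw, h0, h1⟩ := h12
    exact ⟨w, hw, agrees_single (by rw [h0, hx]), agrees_single (by rw [h1, hy])⟩
  · obtain ⟨w, hw, h0, h1⟩ := h21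
    exact ⟨w, hw, agrees_single (by rw [h0, hx]), agrees_single (by rw [h1, hy])⟩
  · obtain ⟨w, hw, h0, h1⟩ := h22
    exact ⟨w, hw, agrees_single (by rw [h0, hx]), agrees_single (by rw [h1, hy])⟩

/-- Example table 1: `{(1,1),(1,1),(2,2),(2,2),(⊥,⊥)}` (values repeated on all attrs) -/
def Tbl1 : Table ℕ ℕ := t2 ::ₘ t2 ::ₘ tn ::ₘ t1 ::ₘ (t1 ::ₘ 0)

/-- Example table 2: `{(1,1),(2,2)}` -/
def Tbl2 : Table ℕ ℕ := t1 ::ₘ (t2 ::ₘ 0)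

lemma t1_total : ∀ A, t1 A ≠ (none : Option ℕ) := fun _ h => Option.some_ne_none _ h
lemma t2_total : ∀ A, t2 A ≠ (none : Option ℕ) := fun _ h => Option.some_ne_none _ h
lemma s12_total : ∀ A, s12 A ≠ (none : Option ℕ) := by
  intro A h
  by_cases hA : A = 0 <;> simp [s12, hA] at h
lemma s21_total : ∀ A, s21 A ≠ (none : Option ℕ) := by
  intro A h
  by_cases hA : A = 0 <;> simp [s21, hA] at h

lemma part1 : g5 Tbl1 (fun U => spCJ U {0} {1}) < g3 Tbl1 (fun U => spCJ U {0} {1}) := by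
  have hcard : Multiset.card Tbl1 = 5 := by simp [Tbl1]
  -- g5Card ≤ 1 : adding the single tuple s12 repairs the cross join
  have hg5le : g5Card Tbl1 (fun U => spCJ U {0} {1}) ≤ 1 := by
    apply Nat.sInf_le
    refine ⟨(s12 ::ₘ 0), ?_, by simp⟩
    have hadd : Tbl1 + (s12 ::ₘ 0) = t2 ::ₘ t2 ::ₘ tn ::ₘ t1 ::ₘ t1 ::ₘ (s12 ::ₘ 0) := by
      simp [Tbl1, Multiset.cons_add]
    rw [hadd]
    set Ta : Table ℕ ℕ := t2 ::ₘ t2 ::ₘ tn ::ₘ t1 ::ₘ t1 ::ₘ (s12 ::ₘ 0) with hTa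
    refine ⟨t2 ::ₘ t2 ::ₘ s21 ::ₘ t1 ::ₘ t1 ::ₘ (s12 ::ₘ 0), ?_, ?_⟩
    · -- spWorld
      have hextn : spExt Ta tn s21 := by
        intro A
        refine ⟨fun h => absurd rfl h, fun _ => ?_⟩
        by_cases hA : A = 0
        · subst hA
          rw [if_pos ⟨2, mem_VD (show t2 ∈ Ta by simp [hTa]) rfl⟩]
          exact ⟨2, mem_VD (show t2 ∈ Ta by simp [hTa]) rfl, by simp [s21]⟩
        · rw [if_pos ⟨1, mem_VD (show t1 ∈ Ta by simp [hTa]) rfl⟩]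
          exact ⟨1, mem_VD (show t1 ∈ Ta by simp [hTa]) rfl, by simp [s21, hA]⟩
      exact Multiset.Rel.cons (spExt_total t2_total)
        (Multiset.Rel.cons (spExt_total t2_total)
        (Multiset.Rel.cons hextn
        (Multiset.Rel.cons (spExt_total t1_total)
        (Multiset.Rel.cons (spExt_total t1_total)
        (Multiset.Rel.cons (spExt_total s12_total) Multiset.Rel.zero)))))
    · -- cross join holds
      refine cj_of ⟨t1, by simp, rfl, rfl⟩ ⟨s12, by simp, rfl, rfl⟩
        ⟨s21, by simp, rfl, rfl⟩ ⟨t2, by simp, rfl, rfl⟩ ?_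
      intro u hu
      simp only [Multiset.mem_cons, Multiset.notMem_zero, or_false] at hu
      rcases hu with h | h | h | h | h | h <;> subst h <;>
        exact ⟨by first | exact Or.inl rfl | exact Or.inr rfl,
               by first | exact Or.inl rfl | exact Or.inr rfl⟩
  -- g3Card = 2
  have hmem2 : 2 ∈ {n : ℕ | ∃ T₀ S : Table ℕ ℕ,
      Tbl1 = T₀ + S ∧ spCJ T₀ {0} {1} ∧ Multiset.card S = n} := by
    refine ⟨t2 ::ₘ t2 ::ₘ (tn ::ₘ 0), t1 ::ₘ (t1 ::ₘ 0), ?_, ?_, by simp⟩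
    · rw [Tbl1, Multiset.cons_add, Multiset.cons_add, Multiset.cons_add, zero_add]
    · set Tb : Table ℕ ℕ := t2 ::ₘ t2 ::ₘ (tn ::ₘ 0) with hTb
      refine ⟨t2 ::ₘ t2 ::ₘ (t2 ::ₘ 0), ?_, ?_⟩
      · have hextn : spExt Tb tn t2 := by
          intro A
          refine ⟨fun h => absurd rfl h, fun _ => ?_⟩
          rw [if_pos ⟨2, mem_VD (show t2 ∈ Tb by simp [hTb]) rfl⟩]
          exact ⟨2, mem_VD (show t2 ∈ Tb by simp [hTb]) rfl, rfl⟩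
        exact Multiset.Rel.cons (spExt_total t2_total)
          (Multiset.Rel.cons (spExt_total t2_total)
          (Multiset.Rel.cons hextn Multiset.Rel.zero))
      · intro u1 h1 u2 h2
        have e1 : u1 = t2 := by simpa using h1
        have e2 : u2 = t2 := by simpa using h2
        exact ⟨t2, by simp, agrees_single (by rw [e1]), agrees_single (by rw [e2])⟩
  have hlb : ∀ n ∈ {n : ℕ | ∃ T₀ S : Table ℕ ℕ,
      Tbl1 = T₀ + S ∧ spCJ T₀ {0} {1} ∧ Multiset.card S = n}, 2 ≤ n := by
    rintro n ⟨T₀, S, hTS, hP, hScard⟩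
    by_contra hlt
    push_neg at hlt
    have hS1 : Multiset.card S ≤ 1 := by omega
    have c1 : Multiset.countP (fun t => t 0 = some 1 ∧ t 1 = some 1) Tbl1 = 2 := by
      rw [Tbl1, Multiset.countP_cons, Multiset.countP_cons, Multiset.countP_cons,
        Multiset.countP_cons, Multiset.countP_cons, Multiset.countP_zero]
      simp [t1, t2, tn]
    have c2 : Multiset.countP (fun t => t 0 = some 2 ∧ t 1 = some 2) Tbl1 = 2 := by
      rw [Tbl1, Multiset.countP_cons, Multiset.countP_cons, Multiset.countP_cons,
        Multiset.countP_cons, Multiset.countP_cons, Multiset.countP_zero]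
      simp [t1, t2, tn]
    have cq : Multiset.countP qbad Tbl1 = 1 := by
      rw [Tbl1, Multiset.countP_cons, Multiset.countP_cons, Multiset.countP_cons,
        Multiset.countP_cons, Multiset.countP_cons, Multiset.countP_zero]
      simp [qbad, t1, t2, tn]
    rw [hTS, Multiset.countP_add] at c1 c2 cq
    have hs1 : Multiset.countP (fun t => t 0 = some 1 ∧ t 1 = some 1) S ≤ 1 :=
      le_trans (Multiset.countP_le_card _ _) hS1
    have hs2 : Multiset.countP (fun t => t 0 = some 2 ∧ t 1 = some 2) S ≤ 1 :=
      le_trans (Multiset.countP_le_card _ _) hS1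
    have p1 : 0 < Multiset.countP (fun t => t 0 = some 1 ∧ t 1 = some 1) T₀ := by linarith
    have p2 : 0 < Multiset.countP (fun t => t 0 = some 2 ∧ t 1 = some 2) T₀ := by linarith
    have hqle : Multiset.countP qbad T₀ ≤ 1 := by
      have := Multiset.countP_le_card qbad S
      linarith
    exact not_spCJ (Multiset.countP_pos.1 p1) (Multiset.countP_pos.1 p2) hqle hP
  have hg3 : g3Card Tbl1 (fun U => spCJ U {0} {1}) = 2 :=
    le_antisymm (Nat.sInf_le hmem2) (hlb _ (Nat.sInf_mem ⟨2, hmem2⟩))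
  have hc5 : ((g5Card Tbl1 (fun U => spCJ U {0} {1}) : ℕ) : ℚ) ≤ 1 := by
    exact_mod_cast hg5le
  unfold g5 g3
  rw [hcard, hg3]
  rw [div_lt_div_iff₀ (by norm_num) (by norm_num)]
  push_cast
  linarith

lemma part2 : g3 Tbl2 (fun U => spCJ U {0} {1}) < g5 Tbl2 (fun U => spCJ U {0} {1}) := by
  have hcard : Multiset.card Tbl2 = 2 := by simp [Tbl2]
  -- g3Card ≤ 1 : deleting t2 makes the cross join hold
  have hg3le : g3Card Tbl2 (fun U => spCJ U {0} {1}) ≤ 1 := by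
    apply Nat.sInf_le
    refine ⟨(t1 ::ₘ 0), (t2 ::ₘ 0), by rw [Tbl2, Multiset.cons_add, zero_add], ?_, by simp⟩
    refine ⟨(t1 ::ₘ 0), Multiset.Rel.cons (spExt_total t1_total) Multiset.Rel.zero, ?_⟩
    intro u1 h1 u2 h2
    have e1 : u1 = t1 := by simpa using h1
    have e2 : u2 = t1 := by simpa using h2
    exact ⟨t1, by simp, agrees_single (by rw [e1]), agrees_single (by rw [e2])⟩
  -- g5Card = 2
  have hmem2 : 2 ∈ {n : ℕ | ∃ S : Table ℕ ℕ,
      spCJ (Tbl2 + S) {0} {1} ∧ Multiset.card S = n} := by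
    refine ⟨(s12 ::ₘ s21 ::ₘ 0), ?_, by simp⟩
    have hadd : Tbl2 + ((s12 ::ₘ s21 ::ₘ 0)) = t1 ::ₘ t2 ::ₘ (s12 ::ₘ s21 ::ₘ 0) := by
      rw [Tbl2, Multiset.cons_add, Multiset.cons_add, zero_add]
    rw [hadd]
    refine ⟨t1 ::ₘ t2 ::ₘ (s12 ::ₘ s21 ::ₘ 0), ?_, ?_⟩
    · exact Multiset.Rel.cons (spExt_total t1_total)
        (Multiset.Rel.cons (spExt_total t2_total)
        (Multiset.Rel.cons (spExt_total s12_total)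
        (Multiset.Rel.cons (spExt_total s21_total) Multiset.Rel.zero)))
    · refine cj_of ⟨t1, by simp, rfl, rfl⟩ ⟨s12, by simp, rfl, rfl⟩
        ⟨s21, by simp, rfl, rfl⟩ ⟨t2, by simp, rfl, rfl⟩ ?_
      intro u hu
      simp only [Multiset.mem_cons, Multiset.notMem_zero, or_false] at hu
      rcases hu with h | h | h | h <;> subst h <;>
        exact ⟨by first | exact Or.inl rfl | exact Or.inr rfl,
               by first | exact Or.inl rfl | exact Or.inr rfl⟩
  have hlb : ∀ n ∈ {n : ℕ | ∃ S : Table ℕ ℕ,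
      spCJ (Tbl2 + S) {0} {1} ∧ Multiset.card S = n}, 2 ≤ n := by
    rintro n ⟨S, hP, hScard⟩
    by_contra hlt
    push_neg at hlt
    have hS1 : Multiset.card S ≤ 1 := by omega
    have h1 : ∃ a ∈ Tbl2 + S, a 0 = some 1 ∧ a 1 = some 1 :=
      ⟨t1, Multiset.mem_add.2 (Or.inl (by simp [Tbl2])), rfl, rfl⟩
    have h2 : ∃ b ∈ Tbl2 + S, b 0 = some 2 ∧ b 1 = some 2 :=
      ⟨t2, Multiset.mem_add.2 (Or.inl (by simp [Tbl2])), rfl, rfl⟩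
    have cq2 : Multiset.countP qbad Tbl2 = 0 := by
      rw [Tbl2, Multiset.countP_cons, Multiset.countP_cons, Multiset.countP_zero]
      simp [qbad, t1, t2]
    have cqS : Multiset.countP qbad S ≤ 1 :=
      le_trans (Multiset.countP_le_card _ _) hS1
    have hq : Multiset.countP qbad (Tbl2 + S) ≤ 1 := by
      rw [Multiset.countP_add]; linarith
    exact not_spCJ h1 h2 hq hP
  have hg5 : g5Card Tbl2 (fun U => spCJ U {0} {1}) = 2 :=
    le_antisymm (Nat.sInf_le hmem2) (hlb _ (Nat.sInf_mem ⟨2, hmem2⟩))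
  have hc3 : ((g3Card Tbl2 (fun U => spCJ U {0} {1}) : ℕ) : ℚ) ≤ 1 := by
    exact_mod_cast hg3le
  unfold g5 g3
  rw [hcard, hg5]
  rw [div_lt_div_iff₀ (by norm_num) (by norm_num)]
  push_cast
  linarith

end Stmt16

open SPDB in
/-- `g3` and `g5` are independent for spCJs: there are a table with
`g3(X ×_sp Y) > g5(X ×_sp Y)` and a table with `g3(X ×_sp Y) < g5(X ×_sp Y)`. -/
theorem statement16 :
    (∃ (X1 Y1 : Finset ℕ) (T1 : Table ℕ ℕ),
      g5 T1 (fun U => spCJ U X1 Y1) < g3 T1 (fun U => spCJ U X1 Y1)) ∧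
    (∃ (X2 Y2 : Finset ℕ) (T2 : Table ℕ ℕ),
      g3 T2 (fun U => spCJ U X2 Y2) < g5 T2 (fun U => spCJ U X2 Y2)) :=
  ⟨⟨{0}, {1}, Stmt16.Tbl1, Stmt16.part1⟩, ⟨{0}, {1}, Stmt16.Tbl2, Stmt16.part2⟩⟩
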